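/- For any reduced proper generalized Young wall Y of type A_n^(1), the number of distinct parts of the Kostant partition (φ∘Ψ)(Y) equals N(Y) := n·P(Y) + Σ_{j=1}^{n+1} #(S_j(Y) \ Q(Y)), where P(Y) = Σ_{t ≥ 1, (n+1)∤t} max{p_m : q_m = t, m ≥ 0} and Q(Y) = (∪_{m≥0} {(n+1)^s q_m : 0 ≤ s ≤ p_m - 1}) ∪ {0}, with N_{(n+1)(m+1)}(Y) = (n+1)^{p_m} q_m, (n+1) ∤ q_m (and (p_m,q_m) = (0,0) if the row is empty). -/

import Mathlib

/-- Generators for Kostant partition expressions in type A_n^(1):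
`imag j m` is the part (m δ_j); `real c i ℓ` is the part (c δ + α_i^(ℓ));
`dsym m` is the formal symbol δ^(m). -/
inductive Gen (n : ℕ) : Type
  | imag : Fin n → ℕ → Gen n
  | real : ℕ → Fin (n+1) → ℕ → Gen n
  | dsym : ℕ → Gen n
  deriving DecidableEq

/-- Full unfolding of the symbol δ^(m) under the defining relations. -/
def unfoldDelta (n : ℕ) : ℕ → Multiset (Gen n)
  | 0 => 0
  | (m+1) =>
    if h0 : n = 0 then 0
    else if (m+1) % (n+1) = 0 then
      unfoldDelta n ((m+1)/(n+1)) +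
        Multiset.map (fun j : Fin n => Gen.imag j ((m+1)/(n+1))) Finset.univ.val
    else
      Multiset.map (fun j : Fin (n+1) => Gen.real ((m+1)/(n+1)) j ((m+1) % (n+1)))
        Finset.univ.val
  decreasing_by exact Nat.div_lt_self (Nat.succ_pos m) (by omega)

/-- The unfolding map φ on expressions: expand every δ^(m) symbol. -/
def unfoldExpr (n : ℕ) (e : Multiset (Gen n)) : Multiset (Gen n) :=
  e.bind (fun g => match g with
    | Gen.dsym m => unfoldDelta n m
    | g => {g})

def ValidGen (n : ℕ) : Gen n → Prop
  | Gen.imag _ m => 0 < m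
  | Gen.real _ _ ℓ => 1 ≤ ℓ ∧ ℓ ≤ n
  | Gen.dsym m => 0 < m

def IsDsym {n : ℕ} : Gen n → Prop
  | Gen.dsym _ => True
  | _ => False

/-- Membership in K: a Z_{≥0}-combination of the generators in S_1. -/
def IsK (n : ℕ) (e : Multiset (Gen n)) : Prop :=
  ∀ g ∈ e, ValidGen n g ∧ ¬ IsDsym g

/-- The expression contains parts that can be replaced by some δ^(k). -/
def HasRemovableDeltaExpr (n : ℕ) (e : Multiset (Gen n)) : Prop :=
  ∃ k : ℕ, 0 < k ∧
    ((¬ (n+1) ∣ k ∧ ∀ i : Fin (n+1), Gen.real (k/(n+1)) i (k % (n+1)) ∈ e) ∨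
     ((n+1) ∣ k ∧ Gen.dsym (k/(n+1)) ∈ e ∧ ∀ j : Fin n, Gen.imag j (k/(n+1)) ∈ e))

/-- Membership in K(∞): reduced expressions. -/
def IsKinf (n : ℕ) (e : Multiset (Gen n)) : Prop :=
  (∀ g ∈ e, ValidGen n g) ∧ ¬ HasRemovableDeltaExpr n e

/- Generalized Young walls, encoded by their sequence of row lengths:
`Y r` is the number of boxes in the (r+1)-st row from the bottom. -/

def IsProper (n : ℕ) (Y : ℕ →₀ ℕ) : Prop :=
  ∀ r s : ℕ, r ≤ s → r % (n+1) = s % (n+1) → Y s ≤ Y r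

/-- `aCount n Y i k` is the number of i-colored boxes in the k-th column of Y. -/
def aCount (n : ℕ) (Y : ℕ →₀ ℕ) (i : ZMod (n+1)) (k : ℕ) : ℕ :=
  (Y.support.filter (fun r => k ≤ Y r ∧ (((r : ℤ) + 1 - (k : ℤ) : ℤ) : ZMod (n+1)) = i)).card

/-- Some column of Y contains a removable δ. -/
def HasRemovableDelta (n : ℕ) (Y : ℕ →₀ ℕ) : Prop :=
  ∃ k : ℕ, 1 ≤ k ∧ ∀ i : ZMod (n+1), aCount n Y (i - 1) (k+1) < aCount n Y i k

/-- Reduced proper generalized Young walls. -/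
def IsYinf (n : ℕ) (Y : ℕ →₀ ℕ) : Prop :=
  IsProper n Y ∧ ¬ HasRemovableDelta n Y

def resFin (n r : ℕ) : Fin (n+1) := ⟨(r+1) % (n+1), Nat.mod_lt _ (Nat.succ_pos n)⟩

/-- The Kostant partition part(s) assigned to a row in residue class j (of row number
mod n+1) with N boxes. -/
def rowPart (n : ℕ) (j : Fin (n+1)) (N : ℕ) : Multiset (Gen n) :=
  if N = 0 then 0
  else if hj : j.val = 0 then
    if N % (n+1) = 0 then {Gen.dsym (N/(n+1))}
    else {Gen.real (N/(n+1)) (Fin.last n) (N % (n+1))}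
  else
    if N % (n+1) = 0 then {Gen.imag ⟨j.val - 1, by have := j.isLt; omega⟩ (N/(n+1))}
    else {Gen.real (N/(n+1)) ⟨j.val - 1, by have := j.isLt; omega⟩ (N % (n+1))}

/-- The map Ψ from generalized Young walls to Kostant partition expressions. -/
def PsiMap (n : ℕ) (Y : ℕ →₀ ℕ) : Multiset (Gen n) :=
  Y.support.val.bind (fun r => rowPart n (resFin n r) (Y r))

/-- S_j(Y) \ {0}: the set of distinct nonzero lengths of rows in positions ≡ j mod n+1. -/
def Sj (n : ℕ) (Y : ℕ →₀ ℕ) (j : ℕ) : Finset ℕ :=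
  ((Y.support.filter (fun r => (r+1) % (n+1) = j % (n+1))).image Y).erase 0

/-- p with N = (n+1)^p q, (n+1) ∤ q (for N > 0); gives 0 for N = 0. -/
def pval (n N : ℕ) : ℕ := Nat.findGreatest (fun p => (n+1)^p ∣ N) N

def qval (n N : ℕ) : ℕ := N / (n+1)^(pval n N)

def Qset (n : ℕ) (Y : ℕ →₀ ℕ) : Finset ℕ :=
  insert 0 ((Y.support.filter (fun r => (r+1) % (n+1) = 0)).biUnion
    (fun r => (Finset.range (pval n (Y r))).image (fun s => (n+1)^s * qval n (Y r))))

def Pstat (n : ℕ) (Y : ℕ →₀ ℕ) : ℕ :=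
  ∑ t ∈ ((Y.support.filter (fun r => (r+1) % (n+1) = 0)).image (fun r => qval n (Y r))).erase 0,
    (Y.support.filter (fun r => (r+1) % (n+1) = 0 ∧ qval n (Y r) = t)).sup
      (fun r => pval n (Y r))

section PQ
variable {n : ℕ}

lemma lt_pow_self' (hn : 1 ≤ n) (p : ℕ) : p < (n+1)^p :=
  Nat.lt_pow_self (by omega : 1 < n+1)

lemma pval_dvd (N : ℕ) : (n+1)^(pval n N) ∣ N := by
  rcases Nat.eq_zero_or_pos (pval n N) with h | h
  · rw [h]; exact one_dvd N
  · exact Nat.findGreatest_of_ne_zero (P := fun p => (n+1)^p ∣ N) (n := N) rfl (by omega)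

lemma pq_mul (N : ℕ) : N = (n+1)^(pval n N) * qval n N :=
  (Nat.mul_div_cancel' (pval_dvd N)).symm

lemma pval_not_dvd (hn : 1 ≤ n) {N : ℕ} (h : 0 < N) : ¬ (n+1)^(pval n N + 1) ∣ N := by
  intro hd
  have hle : (n+1)^(pval n N + 1) ≤ N := Nat.le_of_dvd h hd
  have h2 := lt_pow_self' hn (pval n N + 1)
  exact Nat.findGreatest_is_greatest (P := fun p => (n+1)^p ∣ N) (n := N)
    (Nat.lt_succ_self _)
    (by have : pval n N = Nat.findGreatest (fun p => (n+1)^p ∣ N) N := rfl; omega) hd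

lemma qval_not_dvd (hn : 1 ≤ n) {N : ℕ} (h : 0 < N) : ¬ (n+1) ∣ qval n N := by
  intro ⟨c, hc⟩
  refine pval_not_dvd hn h ⟨c, ?_⟩
  calc N = (n+1)^(pval n N) * qval n N := pq_mul N
    _ = (n+1)^(pval n N + 1) * c := by rw [hc, pow_succ]; ring

lemma qval_pos (hn : 1 ≤ n) {N : ℕ} (h : 0 < N) : 0 < qval n N :=
  Nat.div_pos (Nat.le_of_dvd h (pval_dvd N)) (Nat.pow_pos (by omega))

lemma pq_unique (hn : 1 ≤ n) {p q N : ℕ} (hq : ¬ (n+1) ∣ q)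
    (hN : N = (n+1)^p * q) : pval n N = p ∧ qval n N = q := by
  have hq0 : 0 < q := Nat.pos_of_ne_zero (fun h => hq (h ▸ dvd_zero _))
  have hp1 : 0 < (n+1)^p := Nat.pow_pos (by omega)
  have hN0 : 0 < N := hN ▸ Nat.mul_pos hp1 hq0
  have hple : pval n N ≤ p := by
    by_contra hlt
    push_neg at hlt
    have h1 : (n+1)^(p+1) ∣ N := dvd_trans (pow_dvd_pow _ (by omega)) (pval_dvd N)
    rw [hN, pow_succ] at h1
    exact hq ((mul_dvd_mul_iff_left (a := (n+1)^p) (by positivity)).mp h1)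
  have hpge : p ≤ pval n N := by
    refine Nat.le_findGreatest ?_ ⟨q, hN⟩
    have h2 : (n+1)^p ≤ N := hN ▸ Nat.le_mul_of_pos_right _ hq0
    have := lt_pow_self' hn p
    omega
  have hp : pval n N = p := le_antisymm hple hpge
  refine ⟨hp, ?_⟩
  have h3 := pq_mul (n := n) N
  rw [hp] at h3
  exact (Nat.eq_of_mul_eq_mul_left hp1 (hN.symm.trans h3)).symm

/-- pval/qval of N when (n+1) ∣ N, in terms of N/(n+1). -/
lemma pq_div (hn : 1 ≤ n) {N : ℕ} (h : 0 < N) (hd : (n+1) ∣ N) :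
    pval n N = pval n (N/(n+1)) + 1 ∧ qval n N = qval n (N/(n+1)) := by
  obtain ⟨m, hm⟩ := hd
  have hm0 : 0 < m := by
    rcases Nat.eq_zero_or_pos m with h0 | h0
    · rw [h0, mul_zero] at hm; omega
    · exact h0
  have hmN : N / (n+1) = m := by rw [hm]; exact Nat.mul_div_cancel_left m (by omega)
  rw [hmN]
  refine pq_unique hn (qval_not_dvd hn hm0) ?_
  rw [hm, pow_succ]
  calc (n+1) * m = (n+1) * ((n+1)^(pval n m) * qval n m) := by rw [← pq_mul]
    _ = (n+1)^(pval n m) * (n+1) * qval n m := by ring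

lemma pval_pos_of_dvd (hn : 1 ≤ n) {N : ℕ} (h : 0 < N) (hd : (n+1) ∣ N) : 0 < pval n N := by
  have := (pq_div hn h hd).1; omega

lemma pq_of_not_dvd (hn : 1 ≤ n) {N : ℕ} (hd : ¬ (n+1) ∣ N) :
    pval n N = 0 ∧ qval n N = N :=
  pq_unique hn hd (by simp)

end PQ

section Char
variable {n : ℕ}

/-- real generator encoding value N (index i). -/
def genReal (n : ℕ) (i : Fin (n+1)) (N : ℕ) : Gen n :=
  Gen.real (N/(n+1)) i (N%(n+1))

/-- generator of index i : Fin n encoding value N. -/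
def genOf (n : ℕ) (i : Fin n) (N : ℕ) : Gen n :=
  if (n+1) ∣ N then Gen.imag i (N/(n+1)) else Gen.real (N/(n+1)) i.castSucc (N%(n+1))

lemma mem_unfoldDelta (hn : 1 ≤ n) {m : ℕ} (hm : 0 < m) {g : Gen n} :
    g ∈ unfoldDelta n m ↔
      ((∃ i : Fin (n+1), g = genReal n i (qval n m)) ∨
       (∃ i : Fin n, ∃ s, s < pval n m ∧ g = Gen.imag i ((n+1)^s * qval n m))) := by
  induction m using Nat.strong_induction_on with
  | _ m IH =>
  obtain ⟨m', rfl⟩ : ∃ m', m = m' + 1 := ⟨m - 1, by omega⟩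
  rw [unfoldDelta]
  rw [dif_neg (by omega : ¬ n = 0)]
  by_cases hd : (m' + 1) % (n+1) = 0
  · rw [if_pos hd]
    have hdvd : (n+1) ∣ (m'+1) := Nat.dvd_of_mod_eq_zero hd
    obtain ⟨hp, hq⟩ := pq_div hn hm hdvd
    have hm'0 : 0 < (m'+1)/(n+1) := Nat.div_pos (Nat.le_of_dvd hm hdvd) (by omega)
    have hlt : (m'+1)/(n+1) < m'+1 := Nat.div_lt_self hm (by omega)
    rw [Multiset.mem_add, IH _ hlt hm'0]
    have hval : (m'+1)/(n+1) = (n+1)^(pval n ((m'+1)/(n+1))) * qval n ((m'+1)/(n+1)) :=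
      pq_mul _
    constructor
    · rintro ((⟨i, rfl⟩ | ⟨i, s, hs, rfl⟩) | hmem)
      · left; exact ⟨i, by rw [hq]⟩
      · right; exact ⟨i, s, by omega, by rw [hq]⟩
      · simp only [Multiset.mem_map, Finset.mem_val, Finset.mem_univ, true_and] at hmem
        obtain ⟨i, rfl⟩ := hmem
        right
        exact ⟨i, pval n ((m'+1)/(n+1)), by omega, by rw [hq, ← hval]⟩
    · rintro (⟨i, rfl⟩ | ⟨i, s, hs, rfl⟩)
      · left; left; exact ⟨i, by rw [hq]⟩
      · rcases Nat.lt_or_ge s (pval n ((m'+1)/(n+1))) with h | h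
        · left; right; exact ⟨i, s, h, by rw [hq]⟩
        · have hseq : s = pval n ((m'+1)/(n+1)) := by omega
          right
          simp only [Multiset.mem_map, Finset.mem_val, Finset.mem_univ, true_and]
          exact ⟨i, by rw [hq, hseq, ← hval]⟩
  · rw [if_neg hd]
    have hnd : ¬ (n+1) ∣ (m'+1) := by
      rw [Nat.dvd_iff_mod_eq_zero]; exact fun h => hd h
    obtain ⟨hp, hq⟩ := pq_of_not_dvd hn hnd
    rw [hp, hq]
    simp only [Multiset.mem_map, Finset.mem_val, Finset.mem_univ, true_and]
    constructor
    · rintro ⟨i, rfl⟩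
      exact Or.inl ⟨i, rfl⟩
    · rintro (⟨i, rfl⟩ | ⟨i, s, hs, -⟩)
      · exact ⟨i, rfl⟩
      · omega
end Char

section Rows
variable {n : ℕ}

lemma genOf_dvd {i : Fin n} {v : ℕ} (hd : (n+1) ∣ v) :
    genOf n i v = Gen.imag i (v/(n+1)) := if_pos hd

lemma genOf_not_dvd {i : Fin n} {v : ℕ} (hd : ¬ (n+1) ∣ v) :
    genOf n i v = genReal n i.castSucc v := if_neg hd

lemma genOf_pow {i : Fin n} {s q : ℕ} (hs : 0 < s) :
    genOf n i ((n+1)^s * q) = Gen.imag i ((n+1)^(s-1) * q) := by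
  obtain ⟨s, rfl⟩ : ∃ s', s = s' + 1 := ⟨s - 1, by omega⟩
  rw [genOf_dvd ⟨(n+1)^s * q, by ring⟩]
  congr 1
  rw [pow_succ]
  rw [show (n+1)^s * (n+1) * q = (n+1) * ((n+1)^s * q) by ring]
  simp [Nat.mul_div_cancel_left _ (Nat.succ_pos n)]

lemma genReal_inj {i : Fin (n+1)} {v w : ℕ} (h : genReal n i v = genReal n i w) : v = w := by
  obtain ⟨h1, -, h2⟩ : _ ∧ _ ∧ _ := by simpa only [genReal, Gen.real.injEq] using h
  rw [← Nat.div_add_mod v (n+1), ← Nat.div_add_mod w (n+1), h1, h2]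

lemma genOf_inj {i : Fin n} {v w : ℕ} (h : genOf n i v = genOf n i w) : v = w := by
  by_cases hv : (n+1) ∣ v <;> by_cases hw : (n+1) ∣ w <;>
    simp only [genOf, if_pos, if_neg, hv, hw, if_true, if_false] at h
  · simp only [Gen.imag.injEq] at h
    obtain ⟨a, rfl⟩ := hv; obtain ⟨b, rfl⟩ := hw
    rw [Nat.mul_div_cancel_left _ (Nat.succ_pos n), Nat.mul_div_cancel_left _ (Nat.succ_pos n)] at h
    rw [h.2]
  · exact absurd h (by simp [Gen.imag.injEq])
  · exact absurd h (by simp)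
  · obtain ⟨h1, -, h2⟩ : _ ∧ _ ∧ _ := by simpa only [Gen.real.injEq] using h
    rw [← Nat.div_add_mod v (n+1), ← Nat.div_add_mod w (n+1), h1, h2]

lemma unfoldExpr_singleton (g : Gen n) (h : ¬ IsDsym g) :
    unfoldExpr n {g} = {g} := by
  cases g with
  | imag i m => simp [unfoldExpr]
  | real c i l => simp [unfoldExpr]
  | dsym m => exact absurd trivial h

lemma unfoldExpr_dsym (m : ℕ) : unfoldExpr n ({Gen.dsym m} : Multiset (Gen n)) = unfoldDelta n m := by
  simp [unfoldExpr]

lemma rowGens_ne {j : Fin (n+1)} (hj : j.val ≠ 0) {N : ℕ} (hN : N ≠ 0) :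
    unfoldExpr n (rowPart n j N) =
      {genOf n ⟨j.val - 1, by have := j.isLt; omega⟩ N} := by
  rw [rowPart, if_neg hN, dif_neg hj]
  by_cases hd : N % (n+1) = 0
  · rw [if_pos hd, unfoldExpr_singleton _ (by simp [IsDsym]), genOf_dvd (Nat.dvd_of_mod_eq_zero hd)]
  · rw [if_neg hd, unfoldExpr_singleton _ (by simp [IsDsym]),
      genOf_not_dvd (fun h => hd (Nat.eq_zero_of_dvd_of_lt h |> fun _ => by omega))]
    rfl

lemma rowGens_zero_ndvd {j : Fin (n+1)} (hj : j.val = 0) {N : ℕ} (hN : N ≠ 0)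
    (hd : ¬ (n+1) ∣ N) :
    unfoldExpr n (rowPart n j N) = {genReal n (Fin.last n) N} := by
  rw [rowPart, if_neg hN, dif_pos hj, if_neg (fun h => hd (Nat.dvd_of_mod_eq_zero h)),
    unfoldExpr_singleton _ (by simp [IsDsym])]
  rfl

lemma mem_rowGens_zero_dvd (hn : 1 ≤ n) {j : Fin (n+1)} (hj : j.val = 0) {N : ℕ} (hN : N ≠ 0)
    (hd : (n+1) ∣ N) {g : Gen n} :
    g ∈ unfoldExpr n (rowPart n j N) ↔
      ((∃ i : Fin (n+1), g = genReal n i (qval n N)) ∨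
       (∃ i : Fin n, ∃ s, 0 < s ∧ s < pval n N ∧ g = genOf n i ((n+1)^s * qval n N))) := by
  rw [rowPart, if_neg hN, dif_pos hj, if_pos (Nat.eq_zero_of_dvd_of_lt hd |> fun _ => by
    exact Nat.mod_eq_zero_of_dvd hd), unfoldExpr_dsym]
  have h0 : 0 < N/(n+1) := Nat.div_pos (Nat.le_of_dvd (by omega) hd) (by omega)
  obtain ⟨hp, hq⟩ := pq_div hn (by omega) hd
  rw [mem_unfoldDelta hn h0, hq.symm]
  constructor
  · rintro (⟨i, rfl⟩ | ⟨i, s, hs, rfl⟩)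
    · exact Or.inl ⟨i, by rw [hq]⟩
    · refine Or.inr ⟨i, s+1, by omega, by omega, ?_⟩
      rw [genOf_pow (by omega), hq]
      simp
  · rintro (⟨i, rfl⟩ | ⟨i, s, hs0, hs, rfl⟩)
    · exact Or.inl ⟨i, by rw [hq]⟩
    · refine Or.inr ⟨i, s-1, by omega, ?_⟩
      rw [genOf_pow hs0, hq]

end Rows

section Main
variable {n : ℕ} {Y : ℕ →₀ ℕ}

def Qp (n : ℕ) (Y : ℕ →₀ ℕ) : Finset ℕ := (Qset n Y).erase 0

def bigT (n : ℕ) (Y : ℕ →₀ ℕ) : Finset (Gen n) :=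
  (Finset.univ.biUnion fun i : Fin n => ((Sj n Y (i.val+1)) ∪ Qp n Y).image (genOf n i)) ∪
  (((Sj n Y (n+1)).filter (fun N => ¬(n+1) ∣ N) ∪
    (Qp n Y).filter (fun N => ¬(n+1) ∣ N)).image (genReal n (Fin.last n)))

lemma mem_Sj {v j : ℕ} :
    v ∈ Sj n Y j ↔ v ≠ 0 ∧ ∃ r ∈ Y.support, (r+1) % (n+1) = j % (n+1) ∧ Y r = v := by
  simp only [Sj, Finset.mem_erase, Finset.mem_image, Finset.mem_filter]
  constructor
  · rintro ⟨h0, r, ⟨hr, hres⟩, rfl⟩; exact ⟨h0, r, hr, hres, rfl⟩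
  · rintro ⟨h0, r, hr, hres, rfl⟩; exact ⟨h0, r, ⟨hr, hres⟩, rfl⟩

lemma mem_Qp {v : ℕ} :
    v ∈ Qp n Y ↔ v ≠ 0 ∧ ∃ r ∈ Y.support, (r+1) % (n+1) = 0 ∧
      ∃ s, s < pval n (Y r) ∧ v = (n+1)^s * qval n (Y r) := by
  simp only [Qp, Qset, Finset.mem_erase, Finset.mem_insert, Finset.mem_biUnion,
    Finset.mem_filter, Finset.mem_image, Finset.mem_range]
  constructor
  · rintro ⟨h0, h0' | ⟨r, ⟨hr, hres⟩, s, hs, rfl⟩⟩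
    · exact absurd h0' h0
    · exact ⟨h0, r, hr, hres, s, hs, rfl⟩
  · rintro ⟨h0, r, hr, hres, s, hs, rfl⟩
    exact ⟨h0, Or.inr ⟨r, ⟨hr, hres⟩, s, hs, rfl⟩⟩

lemma mem_mainExpr {g : Gen n} :
    g ∈ unfoldExpr n (PsiMap n Y) ↔
      ∃ r ∈ Y.support, g ∈ unfoldExpr n (rowPart n (resFin n r) (Y r)) := by
  rw [PsiMap, unfoldExpr, Multiset.bind_assoc, Multiset.mem_bind]
  rfl

lemma main_toFinset (hn : 1 ≤ n) :
    (unfoldExpr n (PsiMap n Y)).toFinset = bigT n Y := by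
  ext g
  rw [Multiset.mem_toFinset, mem_mainExpr]
  simp only [bigT, Finset.mem_union, Finset.mem_biUnion, Finset.mem_image, Finset.mem_univ,
    Finset.mem_filter, true_and]
  constructor
  · rintro ⟨r, hr, hg⟩
    have hY0 : Y r ≠ 0 := Finsupp.mem_support_iff.mp hr
    by_cases hj : (r+1) % (n+1) = 0
    · by_cases hd : (n+1) ∣ Y r
      · rw [mem_rowGens_zero_dvd hn (show (resFin n r).val = 0 from hj) hY0 hd] at hg
        have hq0 : qval n (Y r) ≠ 0 := by have := qval_pos hn (Nat.pos_of_ne_zero hY0); omega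
        have hqmem : qval n (Y r) ∈ Qp n Y := by
          rw [mem_Qp]
          exact ⟨hq0, r, hr, hj, 0, pval_pos_of_dvd hn (Nat.pos_of_ne_zero hY0) hd, by simp⟩
        rcases hg with ⟨i, rfl⟩ | ⟨i, s, hs0, hs, rfl⟩
        · by_cases hi : i.val < n
          · left
            refine ⟨⟨i.val, hi⟩, qval n (Y r), Or.inr hqmem, ?_⟩
            rw [genOf_not_dvd (qval_not_dvd hn (Nat.pos_of_ne_zero hY0))]
            congr 1
          · right
            refine ⟨qval n (Y r), Or.inr ⟨hqmem, qval_not_dvd hn (Nat.pos_of_ne_zero hY0)⟩, ?_⟩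
            congr 1
            have := i.isLt
            exact (Fin.ext (by simp [Fin.last]; omega)).symm
        · left
          refine ⟨i, (n+1)^s * qval n (Y r), Or.inr ?_, rfl⟩
          rw [mem_Qp]
          exact ⟨by positivity, r, hr, hj, s, hs, rfl⟩
      · rw [rowGens_zero_ndvd (show (resFin n r).val = 0 from hj) hY0 hd] at hg
        rw [Multiset.mem_singleton] at hg
        right
        refine ⟨Y r, Or.inl ⟨?_, hd⟩, hg.symm⟩
        rw [mem_Sj]
        exact ⟨hY0, r, hr, by rw [Nat.mod_self]; exact hj, rfl⟩
    · rw [rowGens_ne (show (resFin n r).val ≠ 0 from hj) hY0, Multiset.mem_singleton] at hg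
      have hlt : (r+1) % (n+1) < n+1 := Nat.mod_lt _ (by omega)
      left
      refine ⟨⟨(r+1) % (n+1) - 1, by omega⟩, Y r, Or.inl ?_, by rw [hg]; rfl⟩
      rw [mem_Sj]
      refine ⟨hY0, r, hr, ?_, rfl⟩
      rw [Nat.sub_add_cancel (by omega), Nat.mod_eq_of_lt hlt]
  · rintro (⟨i, v, hv | hv, rfl⟩ | ⟨v, ⟨hv, hnd⟩ | ⟨hv, hnd⟩, rfl⟩)
    · -- genOf i v, v ∈ Sj (i+1)
      rw [mem_Sj] at hv
      obtain ⟨h0, r, hr, hres, rfl⟩ := hv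
      refine ⟨r, hr, ?_⟩
      have hi1 : (i.val + 1) % (n+1) = i.val + 1 := Nat.mod_eq_of_lt (by have := i.isLt; omega)
      rw [hi1] at hres
      rw [rowGens_ne (show (resFin n r).val ≠ 0 by simp [resFin]; omega) h0,
        Multiset.mem_singleton]
      congr 1
      exact Fin.ext (by simp [resFin, hres])
    · -- genOf i v, v ∈ Qp
      rw [mem_Qp] at hv
      obtain ⟨h0, r, hr, hres, s, hs, rfl⟩ := hv
      have hY0 : Y r ≠ 0 := Finsupp.mem_support_iff.mp hr
      have hd : (n+1) ∣ Y r := by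
        by_contra hcon
        have := (pq_of_not_dvd hn hcon).1
        omega
      refine ⟨r, hr, ?_⟩
      rw [mem_rowGens_zero_dvd hn (show (resFin n r).val = 0 from hres) hY0 hd]
      rcases Nat.eq_zero_or_pos s with rfl | hs0
      · left
        refine ⟨(⟨i.val, by omega⟩ : Fin n).castSucc, ?_⟩
        rw [pow_zero, one_mul, genOf_not_dvd (qval_not_dvd hn (Nat.pos_of_ne_zero hY0))]
      · exact Or.inr ⟨i, s, hs0, hs, rfl⟩
    · -- genReal last v, v ∈ Sj (n+1)
      rw [mem_Sj] at hv
      obtain ⟨h0, r, hr, hres, rfl⟩ := hv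
      rw [Nat.mod_self] at hres
      refine ⟨r, hr, ?_⟩
      rw [rowGens_zero_ndvd (show (resFin n r).val = 0 from hres) h0 hnd]
      simp
    · -- genReal last v, v ∈ Qp
      rw [mem_Qp] at hv
      obtain ⟨h0, r, hr, hres, s, hs, rfl⟩ := hv
      have hY0 : Y r ≠ 0 := Finsupp.mem_support_iff.mp hr
      have hd : (n+1) ∣ Y r := by
        by_contra hcon
        have := (pq_of_not_dvd hn hcon).1
        omega
      have hs0 : s = 0 := by
        by_contra hcon
        exact hnd (Dvd.dvd.mul_right (dvd_pow_self (n+1) hcon) _)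
      subst hs0
      refine ⟨r, hr, ?_⟩
      rw [mem_rowGens_zero_dvd hn (show (resFin n r).val = 0 from hres) hY0 hd]
      exact Or.inl ⟨Fin.last n, by rw [pow_zero, one_mul]⟩

end Main

section Count
variable {n : ℕ} {Y : ℕ →₀ ℕ}

lemma genOf_index {i i' : Fin n} {v w : ℕ} (h : genOf n i v = genOf n i' w) : i = i' := by
  by_cases hv : (n+1) ∣ v <;> by_cases hw : (n+1) ∣ w <;>
    simp only [genOf, hv, hw, if_true, if_false, genReal, Gen.imag.injEq,
      Gen.real.injEq] at h
  · exact h.1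
  · exact absurd h (by simp)
  · exact absurd h (by simp)
  · exact Fin.castSucc_injective n h.2.1

lemma genOf_ne_genReal_last {i : Fin n} {v w : ℕ} :
    genOf n i v ≠ genReal n (Fin.last n) w := by
  by_cases hv : (n+1) ∣ v <;> simp only [genOf, hv, if_true, if_false, genReal]
  · simp
  · intro h
    have := congrArg (fun g : Gen n => match g with
      | Gen.real _ j _ => j.val | _ => 0) h
    simp [Fin.last] at this
    have := i.isLt
    omega

lemma card_bigT :
    (bigT n Y).card
      = (∑ i : Fin n, ((Sj n Y (i.val+1)) ∪ Qp n Y).card)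
        + ((Sj n Y (n+1)).filter (fun N => ¬(n+1) ∣ N) ∪
           (Qp n Y).filter (fun N => ¬(n+1) ∣ N)).card := by
  rw [bigT, Finset.card_union_of_disjoint, Finset.card_biUnion,
    Finset.card_image_of_injective _ (fun v w h => genReal_inj h)]
  · exact congrArg (· + _) (Finset.sum_congr rfl (fun i _ =>
      Finset.card_image_of_injective _ (fun v w h => genOf_inj h)))
  · intro i _ i' _ hne
    simp only [Finset.disjoint_left, Finset.mem_image]
    rintro g ⟨v, -, rfl⟩ ⟨w, -, h⟩
    exact hne (genOf_index h).symm
  · simp only [Finset.disjoint_left, Finset.mem_biUnion, Finset.mem_image]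
    rintro g ⟨i, -, v, -, rfl⟩ ⟨w, -, h⟩
    exact genOf_ne_genReal_last h.symm

lemma dvd_of_pval_pos (hn : 1 ≤ n) {N : ℕ} (h : 0 < pval n N) : (n+1) ∣ N := by
  have h2 := pq_mul (n := n) N
  obtain ⟨p, hp⟩ : ∃ p, pval n N = p + 1 := ⟨pval n N - 1, by omega⟩
  rw [hp, pow_succ] at h2
  exact ⟨(n+1)^p * qval n N, h2.trans (by ring)⟩

lemma card_last_part (hn : 1 ≤ n) :
    ((Sj n Y (n+1)).filter (fun N => ¬(n+1) ∣ N) ∪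
      (Qp n Y).filter (fun N => ¬(n+1) ∣ N)).card
      = ((Sj n Y (n+1)) \ Qp n Y).card := by
  set A := (Sj n Y (n+1)).filter (fun N => ¬(n+1) ∣ N) with hA
  set B := (Qp n Y).filter (fun N => ¬(n+1) ∣ N) with hB
  set Cd := ((Sj n Y (n+1)).filter (fun N => (n+1) ∣ N)) \ Qp n Y with hC
  -- positivity of members
  have hSj_pos : ∀ v ∈ Sj n Y (n+1), 0 < v := by
    intro v hv; rw [mem_Sj] at hv; omega
  have hQp_pos : ∀ v ∈ Qp n Y, 0 < v := by
    intro v hv; rw [mem_Qp] at hv; omega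
  -- the splitting
  have hsplit : Sj n Y (n+1) \ Qp n Y = (A \ B) ∪ Cd := by
    ext x
    simp only [hA, hB, hC, Finset.mem_sdiff, Finset.mem_union, Finset.mem_filter]
    by_cases hd : (n+1) ∣ x <;> constructor
    · rintro ⟨hS, hQ⟩; exact Or.inr ⟨⟨hS, hd⟩, hQ⟩
    · rintro (⟨⟨-, hnd⟩, -⟩ | ⟨⟨hS, -⟩, hQ⟩)
      · exact absurd hd hnd
      · exact ⟨hS, hQ⟩
    · rintro ⟨hS, hQ⟩; exact Or.inl ⟨⟨hS, hd⟩, fun h => hQ h.1⟩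
    · rintro (⟨⟨hS, -⟩, hQ⟩ | ⟨⟨-, hdd⟩, -⟩)
      · exact ⟨hS, fun h => hQ ⟨h, hd⟩⟩
      · exact absurd hdd hd
  have hdisj : Disjoint (A \ B) Cd := by
    simp only [Finset.disjoint_left, hA, hC, Finset.mem_sdiff, Finset.mem_filter]
    rintro x ⟨⟨-, hnd⟩, -⟩ ⟨⟨-, hdd⟩, -⟩
    exact hnd hdd
  have hCd_card : Cd.card = B.card := by
    apply Finset.card_bij (fun N _ => qval n N)
    · -- maps into B
      rintro N hN
      simp only [hC, Finset.mem_sdiff, Finset.mem_filter] at hN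
      obtain ⟨⟨hS, hd⟩, hQ⟩ := hN
      have hN0 : 0 < N := hSj_pos _ hS
      rw [mem_Sj] at hS
      obtain ⟨-, r, hr, hres, rfl⟩ := hS
      rw [Nat.mod_self] at hres
      simp only [hB, Finset.mem_filter]
      refine ⟨?_, qval_not_dvd hn hN0⟩
      rw [mem_Qp]
      have hp : 0 < pval n (Y r) := pval_pos_of_dvd hn hN0 hd
      exact ⟨by have := qval_pos hn hN0; omega, r, hr, hres, 0, hp, by simp⟩
    · -- injective
      rintro N1 hN1 N2 hN2 heq
      simp only [hC, Finset.mem_sdiff, Finset.mem_filter] at hN1 hN2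
      obtain ⟨⟨hS1, hd1⟩, hQ1⟩ := hN1
      obtain ⟨⟨hS2, hd2⟩, hQ2⟩ := hN2
      have h01 : 0 < N1 := hSj_pos _ hS1
      have h02 : 0 < N2 := hSj_pos _ hS2
      rcases Nat.lt_trichotomy (pval n N1) (pval n N2) with hlt | heqp | hlt
      · exfalso
        apply hQ1
        rw [mem_Sj] at hS2
        obtain ⟨-, r, hr, hres, hYr⟩ := hS2
        rw [Nat.mod_self] at hres
        rw [mem_Qp]
        exact ⟨by omega, r, hr, hres, pval n N1, by rw [hYr]; omega,
          by rw [hYr, ← heq]; exact pq_mul N1⟩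
      · rw [pq_mul (n := n) N1, pq_mul (n := n) N2, heqp, heq]
      · exfalso
        apply hQ2
        rw [mem_Sj] at hS1
        obtain ⟨-, r, hr, hres, hYr⟩ := hS1
        rw [Nat.mod_self] at hres
        rw [mem_Qp]
        exact ⟨by omega, r, hr, hres, pval n N2, by rw [hYr]; omega,
          by rw [hYr, heq]; exact pq_mul N2⟩
    · -- surjective
      rintro t ht
      simp only [hB, Finset.mem_filter] at ht
      obtain ⟨htQ, htnd⟩ := ht
      rw [mem_Qp] at htQ
      obtain ⟨ht0, r, hr, hres, s, hs, rfl⟩ := htQ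
      have hs0 : s = 0 := by
        by_contra hcon
        exact htnd (Dvd.dvd.mul_right (dvd_pow_self (n+1) hcon) _)
      subst hs0
      simp only [pow_zero, one_mul] at ht0 htnd ⊢
      set F := Y.support.filter (fun r' => (r'+1) % (n+1) = 0 ∧ qval n (Y r') = qval n (Y r))
        with hF
      have hrF : r ∈ F := by
        simp only [hF, Finset.mem_filter]
        exact ⟨hr, hres, trivial⟩
      obtain ⟨r', hr'F, hsup⟩ := Finset.exists_mem_eq_sup F ⟨r, hrF⟩ (fun x => pval n (Y x))
      simp only [hF, Finset.mem_filter] at hr'F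
      obtain ⟨hr', hres', hq'⟩ := hr'F
      have hYr'0 : 0 < Y r' := Nat.pos_of_ne_zero (Finsupp.mem_support_iff.mp hr')
      have hple : pval n (Y r) ≤ pval n (Y r') := by
        rw [← hsup]; exact Finset.le_sup (f := fun x => pval n (Y x)) hrF
      refine ⟨Y r', ?_, hq'⟩
      simp only [hC, Finset.mem_sdiff, Finset.mem_filter]
      refine ⟨⟨?_, dvd_of_pval_pos hn (by omega)⟩, ?_⟩
      · rw [mem_Sj]
        exact ⟨by omega, r', hr', by rw [Nat.mod_self]; exact hres', rfl⟩
      · rw [mem_Qp]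
        rintro ⟨-, r'', hr'', hres'', σ, hσ, hYr'⟩
        have hY''0 : 0 < Y r'' := Nat.pos_of_ne_zero (Finsupp.mem_support_iff.mp hr'')
        obtain ⟨hpe, hqe⟩ := pq_unique hn (qval_not_dvd hn hY''0) hYr'
        have hr''F : r'' ∈ F := by
          simp only [hF, Finset.mem_filter]
          exact ⟨hr'', hres'', by rw [← hqe, hq']⟩
        have : pval n (Y r'') ≤ pval n (Y r') := by
          rw [← hsup]; exact Finset.le_sup (f := fun x => pval n (Y x)) hr''F
        omega
  rw [hsplit, Finset.card_union_of_disjoint hdisj, hCd_card,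
    ← Finset.card_sdiff_add_card]

end Count

section Final
variable {n : ℕ} {Y : ℕ →₀ ℕ}

lemma card_Qp (hn : 1 ≤ n) : (Qp n Y).card = Pstat n Y := by
  classical
  set R := Y.support.filter (fun r => (r+1) % (n+1) = 0) with hR
  set T := (R.image (fun r => qval n (Y r))).erase 0 with hT
  set P : ℕ → ℕ := fun t =>
    (Y.support.filter (fun r => (r+1) % (n+1) = 0 ∧ qval n (Y r) = t)).sup
      (fun r => pval n (Y r)) with hP
  have hPstat : Pstat n Y = ∑ t ∈ T, P t := rfl
  have hTnd : ∀ t ∈ T, ¬ (n+1) ∣ t := by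
    intro t ht
    rw [hT, Finset.mem_erase, Finset.mem_image] at ht
    obtain ⟨ht0, r, hr, rfl⟩ := ht
    rw [hR, Finset.mem_filter] at hr
    exact qval_not_dvd hn (Nat.pos_of_ne_zero (Finsupp.mem_support_iff.mp hr.1))
  have hQp : Qp n Y
      = T.biUnion (fun t => (Finset.range (P t)).image (fun s => (n+1)^s * t)) := by
    ext x
    rw [mem_Qp]
    simp only [hT, hR, Finset.mem_biUnion, Finset.mem_erase, Finset.mem_image,
      Finset.mem_filter, Finset.mem_range]
    constructor
    · rintro ⟨h0, r, hr, hres, s, hs, rfl⟩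
      have hY0 : 0 < Y r := Nat.pos_of_ne_zero (Finsupp.mem_support_iff.mp hr)
      refine ⟨qval n (Y r), ⟨by have := qval_pos hn hY0; omega, r, ⟨hr, hres⟩, rfl⟩, s, ?_, rfl⟩
      calc s < pval n (Y r) := hs
        _ ≤ P (qval n (Y r)) := Finset.le_sup (f := fun x => pval n (Y x)) (by
            simp only [Finset.mem_filter]; exact ⟨hr, hres, trivial⟩)
    · rintro ⟨t, ⟨ht0, r0, ⟨hr0, hres0⟩, rfl⟩, s, hs, rfl⟩
      obtain ⟨r', hr', hsup⟩ := Finset.exists_mem_eq_sup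
        (Y.support.filter (fun r => (r+1) % (n+1) = 0 ∧ qval n (Y r) = qval n (Y r0)))
        ⟨r0, by simp only [Finset.mem_filter]; exact ⟨hr0, hres0, trivial⟩⟩
        (fun x => pval n (Y x))
      simp only [Finset.mem_filter] at hr'
      obtain ⟨hr'', hres', hq'⟩ := hr'
      have hPe : P (qval n (Y r0)) = pval n (Y r') := hsup
      refine ⟨Nat.mul_ne_zero (pow_ne_zero s (by omega)) ht0, r', hr'', hres', s, ?_,
        by rw [hq']⟩
      omega
  rw [hQp, hPstat, Finset.card_biUnion]
  · refine Finset.sum_congr rfl fun t ht => ?_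
    rw [Finset.card_image_of_injOn, Finset.card_range]
    intro a _ b _ hab
    have ht0 : t ≠ 0 := (Finset.mem_erase.mp ht).1
    have h2 := Nat.eq_of_mul_eq_mul_right (Nat.pos_of_ne_zero ht0) hab
    exact Nat.pow_right_injective (by omega) h2
  · intro t ht t' ht' hne
    simp only [Finset.disjoint_left, Finset.mem_image, Finset.mem_range]
    rintro x ⟨a, _, rfl⟩ ⟨b, _, hEq⟩
    have h1 := pq_unique hn (hTnd t ht) (rfl : (n+1)^a * t = (n+1)^a * t)
    have h2 := pq_unique hn (hTnd t' ht') hEq.symm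
    exact hne (h1.2.symm.trans h2.2)

lemma Sj_sdiff (j : ℕ) : Sj n Y j \ Qset n Y = Sj n Y j \ Qp n Y := by
  ext x
  simp only [Finset.mem_sdiff, Qp, Finset.mem_erase, and_congr_right_iff]
  intro hx
  have hx0 : x ≠ 0 := by rw [mem_Sj] at hx; exact hx.1
  constructor
  · intro h hc; exact h hc.2
  · intro h hc; exact h ⟨hx0, hc⟩

end Final


/-- Proposition 3.13: for any reduced proper generalized Young wall Y of type A_n^(1),
the number of distinct parts of the Kostant partition (φ∘Ψ)(Y) equals
N(Y) = n·P(Y) + Σ_{j=1}^{n+1} #(S_j(Y) \ Q(Y)), where for each row of Y in a position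
≡ 0 mod n+1 with N_{(n+1)(m+1)}(Y) = (n+1)^{p_m} q_m, (n+1) ∤ q_m (and (p_m,q_m)=(0,0)
for empty rows), Q(Y) = (∪_m {(n+1)^s q_m : 0 ≤ s ≤ p_m - 1}) ∪ {0} and
P(Y) = Σ_{t≥1, (n+1)∤t} max{p_m : q_m = t}. -/
theorem distinct_parts_eq_N (n : ℕ) (hn : 1 ≤ n) (Y : ℕ →₀ ℕ) (hY : IsYinf n Y) :
    (unfoldExpr n (PsiMap n Y)).toFinset.card
      = n * Pstat n Y + ∑ j ∈ Finset.Icc 1 (n+1), ((Sj n Y j) \ Qset n Y).card := by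
  rw [main_toFinset hn, card_bigT, card_last_part hn]
  have hIcc : Finset.Icc 1 (n+1) = (Finset.range (n+1)).image Nat.succ := by
    ext x
    simp only [Finset.mem_Icc, Finset.mem_image, Finset.mem_range]
    constructor
    · intro h; exact ⟨x - 1, by omega, by omega⟩
    · rintro ⟨k, hk, rfl⟩; omega
  rw [hIcc, Finset.sum_image (fun a _ b _ h => Nat.succ_injective h)]
  have hsum : ∀ i ∈ Finset.univ (α := Fin n),
      ((Sj n Y (i.val+1)) ∪ Qp n Y).card
        = ((Sj n Y (i.val+1)) \ Qp n Y).card + Pstat n Y := by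
    intro i _
    rw [← card_Qp hn, Finset.card_sdiff_add_card]
  rw [Finset.sum_congr rfl hsum, Finset.sum_add_distrib]
  simp only [Finset.sum_const, Finset.card_univ, Fintype.card_fin, smul_eq_mul]
  rw [Finset.sum_range_succ]
  have h1 : ∀ k, Sj n Y (Nat.succ k) \ Qset n Y = Sj n Y (k+1) \ Qp n Y := fun k => Sj_sdiff _
  simp only [h1]
  rw [Fin.sum_univ_eq_sum_range (fun k => ((Sj n Y (k+1)) \ Qp n Y).card) n]
  ring
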